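/- The function s ↦ sinh(s/2) is not in the linear span of the functions f_{θ_1}, ..., f_{θ_n} together with constants on any interval (0, S): if R·sinh(s/2) + Σ c_i f_{θ_i}(s) + c₀ = 0 for all s ∈ (0, S), with distinct θ_i ∈ (0, π], then R = 0, c₀ = 0, and all c_i = 0. -/

import Mathlib

open Real Filter Topology


lemma aux_moments {n : ℕ} (t d : Fin n → ℝ) (ht : ∀ i, 0 < t i) {U : ℝ} (hU : 0 < U)
    (h0 : ∀ u ∈ Set.Ioo (0:ℝ) U, ∑ i, d i * ((1 + t i * u) ^ ((1:ℝ)/2) - 1) = 0) :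
    ∀ (k : ℕ), ∀ u ∈ Set.Ioo (0:ℝ) U,
      ∑ i, d i * t i ^ (k+1) * (1 + t i * u) ^ (-(1:ℝ)/2 - k) = 0 := by
  intro k
  induction k with
  | zero =>
    intro u hu
    have pos : ∀ i, (0:ℝ) < 1 + t i * u := fun i => by nlinarith [ht i, hu.1]
    have hder : HasDerivAt (fun v => ∑ i, d i * ((1 + t i * v) ^ ((1:ℝ)/2) - 1))
        (∑ i, d i * (((1:ℝ)/2 * (1 + t i * u) ^ ((1:ℝ)/2 - 1)) * t i)) u := by
      apply HasDerivAt.fun_sum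
      intro i _
      have h1 : HasDerivAt (fun v : ℝ => 1 + t i * v) (t i) u := by
        simpa using ((hasDerivAt_id u).const_mul (t i)).const_add 1
      have h2 := (Real.hasDerivAt_rpow_const (p := (1:ℝ)/2) (Or.inl (pos i).ne')).comp u h1
      exact (h2.sub_const 1).const_mul (d i)
    have hev : (fun v => ∑ i, d i * ((1 + t i * v) ^ ((1:ℝ)/2) - 1)) =ᶠ[𝓝 u] (fun _ => 0) := by
      filter_upwards [isOpen_Ioo.mem_nhds hu] with v hv using h0 v hv
    have hD : (∑ i, d i * (((1:ℝ)/2 * (1 + t i * u) ^ ((1:ℝ)/2 - 1)) * t i)) = 0 := by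
      rw [← hder.deriv, hev.deriv_eq]; simp
    have hxp : ∀ i, (1 + t i * u) ^ (-(1:ℝ)/2 - (0:ℕ)) = (1 + t i * u) ^ ((1:ℝ)/2 - 1) := by
      intro i; norm_num
    calc ∑ i, d i * t i ^ (0+1) * (1 + t i * u) ^ (-(1:ℝ)/2 - (0:ℕ))
        = 2 * ∑ i, d i * (((1:ℝ)/2 * (1 + t i * u) ^ ((1:ℝ)/2 - 1)) * t i) := by
          rw [Finset.mul_sum]
          refine Finset.sum_congr rfl fun i _ => ?_
          rw [hxp i]; ring
      _ = 0 := by rw [hD, mul_zero]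
  | succ k ih =>
    intro u hu
    have pos : ∀ i, (0:ℝ) < 1 + t i * u := fun i => by nlinarith [ht i, hu.1]
    have hder : HasDerivAt (fun v => ∑ i, d i * t i ^ (k+1) * (1 + t i * v) ^ (-(1:ℝ)/2 - k))
        (∑ i, d i * t i ^ (k+1) * (((-(1:ℝ)/2 - k) * (1 + t i * u) ^ (-(1:ℝ)/2 - k - 1)) * t i)) u := by
      apply HasDerivAt.fun_sum
      intro i _
      have h1 : HasDerivAt (fun v : ℝ => 1 + t i * v) (t i) u := by
        simpa using ((hasDerivAt_id u).const_mul (t i)).const_add 1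
      have h2 := (Real.hasDerivAt_rpow_const (p := -(1:ℝ)/2 - k) (Or.inl (pos i).ne')).comp u h1
      exact h2.const_mul (d i * t i ^ (k+1))
    have hev : (fun v => ∑ i, d i * t i ^ (k+1) * (1 + t i * v) ^ (-(1:ℝ)/2 - k)) =ᶠ[𝓝 u] (fun _ => 0) := by
      filter_upwards [isOpen_Ioo.mem_nhds hu] with v hv using ih v hv
    have hD : (∑ i, d i * t i ^ (k+1) * (((-(1:ℝ)/2 - k) * (1 + t i * u) ^ (-(1:ℝ)/2 - k - 1)) * t i)) = 0 := by
      rw [← hder.deriv, hev.deriv_eq]; simp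
    have he : (-(1:ℝ)/2 - k) ≠ 0 := by
      have : (0:ℝ) ≤ k := Nat.cast_nonneg k
      intro hcon; nlinarith
    have hxp : ∀ i, (1 + t i * u) ^ (-(1:ℝ)/2 - ((k:ℕ)+1 : ℕ)) = (1 + t i * u) ^ (-(1:ℝ)/2 - k - 1) := by
      intro i; congr 1; push_cast; ring
    have key : (-(1:ℝ)/2 - k) * (∑ i, d i * t i ^ (k+1+1) * (1 + t i * u) ^ (-(1:ℝ)/2 - ((k:ℕ)+1:ℕ)))
        = ∑ i, d i * t i ^ (k+1) * (((-(1:ℝ)/2 - k) * (1 + t i * u) ^ (-(1:ℝ)/2 - k - 1)) * t i) := by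
      rw [Finset.mul_sum]
      refine Finset.sum_congr rfl fun i _ => ?_
      rw [hxp i]
      ring
    rw [hD] at key
    rcases mul_eq_zero.1 key with hc | hc
    · exact absurd hc he
    · exact hc


lemma aux_vandermonde {n : ℕ} (ρ e : Fin n → ℝ) (hρ : Function.Injective ρ)
    (hM : ∀ k : ℕ, ∑ j, e j * ρ j ^ k = 0) : ∀ i, e i = 0 := by
  intro i
  set q : Polynomial ℝ := ∏ j ∈ Finset.univ.erase i, (Polynomial.X - Polynomial.C (ρ j)) with hq
  have hsum : ∑ j, e j * q.eval (ρ j) = 0 := by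
    have : ∀ j, e j * q.eval (ρ j)
        = ∑ k ∈ Finset.range (q.natDegree + 1), q.coeff k * (e j * ρ j ^ k) := by
      intro j
      rw [Polynomial.eval_eq_sum_range, Finset.mul_sum]
      exact Finset.sum_congr rfl fun k _ => by ring
    simp_rw [this]
    rw [Finset.sum_comm]
    refine Finset.sum_eq_zero fun k _ => ?_
    rw [← Finset.mul_sum, hM k, mul_zero]
  have hzero : ∀ j ∈ Finset.univ, j ≠ i → e j * q.eval (ρ j) = 0 := by
    intro j _ hj
    have : q.eval (ρ j) = 0 := by
      rw [hq, Polynomial.eval_prod]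
      refine Finset.prod_eq_zero (Finset.mem_erase.2 ⟨hj, Finset.mem_univ j⟩) ?_
      simp
    rw [this, mul_zero]
  have hi : e i * q.eval (ρ i) = 0 := by
    rw [← Finset.sum_eq_single i hzero (by simp)]
    exact hsum
  have hne : q.eval (ρ i) ≠ 0 := by
    rw [hq, Polynomial.eval_prod]
    refine Finset.prod_ne_zero_iff.2 fun j hj => ?_
    have : ρ i ≠ ρ j := fun hc => (Finset.mem_erase.1 hj).1 (hρ hc.symm)
    simpa [sub_eq_zero] using this
  exact (mul_eq_zero.1 hi).resolve_right hne

/-- `sinh(s/2)` and the constant `1` are not in the span of the rotation contributions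
`f_θ` on `(0, S)`: if `R·sinh(s/2) + ∑ i, c i · f_{θ i}(s) + c₀ = 0` for all
`s ∈ (0, S)`, with distinct `θ i ∈ (0, π]`, then `R = 0`, `c₀ = 0`, and all `c i = 0`. -/
theorem reflector_conepoint_contributions_independent {n : ℕ} (θ : Fin n → ℝ)
    (hθ : ∀ i, θ i ∈ Set.Ioc (0 : ℝ) π) (hθ_inj : Function.Injective θ)
    (S : ℝ) (hS : 0 < S) (R c₀ : ℝ) (c : Fin n → ℝ)
    (h : ∀ s ∈ Set.Ioo (0 : ℝ) S,
      R * Real.sinh (s / 2) +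
        (∑ i, c i *
          (2 * π * (Real.sqrt (1 + Real.sinh (s / 2) ^ 2 / Real.sin (θ i / 2) ^ 2) - 1))) +
        c₀ = 0) :
    R = 0 ∧ c₀ = 0 ∧ ∀ i, c i = 0 := by
  have hπ : (0:ℝ) < π := Real.pi_pos
  set d : Fin n → ℝ := fun i => c i * (2 * π) with hd_def
  have hsin_pos : ∀ i, 0 < Real.sin (θ i / 2) := fun i =>
    Real.sin_pos_of_pos_of_lt_pi (by linarith [(hθ i).1]) (by linarith [(hθ i).2])
  set t : Fin n → ℝ := fun i => (Real.sin (θ i / 2) ^ 2)⁻¹ with ht_def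
  have ht_pos : ∀ i, 0 < t i := fun i => inv_pos.2 (pow_pos (hsin_pos i) 2)
  -- rewrite the hypothesis using t and d
  set Φ : ℝ → ℝ := fun s => R * Real.sinh (s / 2) +
      (∑ i, d i * (Real.sqrt (1 + t i * Real.sinh (s / 2) ^ 2) - 1)) + c₀ with hΦ_def
  have hΦ : ∀ s ∈ Set.Ioo (0:ℝ) S, Φ s = 0 := by
    intro s hs
    have hterm : ∀ i : Fin n, d i * (Real.sqrt (1 + t i * Real.sinh (s / 2) ^ 2) - 1)
        = c i * (2 * π * (Real.sqrt (1 + Real.sinh (s / 2) ^ 2 / Real.sin (θ i / 2) ^ 2) - 1)) := by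
      intro i
      have harg : 1 + t i * Real.sinh (s / 2) ^ 2
          = 1 + Real.sinh (s / 2) ^ 2 / Real.sin (θ i / 2) ^ 2 := by
        simp only [ht_def]
        rw [div_eq_inv_mul (Real.sinh (s / 2) ^ 2) (Real.sin (θ i / 2) ^ 2)]
      rw [harg, hd_def]; ring
    simp only [hΦ_def]
    simp_rw [hterm]
    exact h s hs
  have hΦcont : Continuous Φ := by
    rw [hΦ_def]
    refine ((continuous_const.mul (Real.continuous_sinh.comp (continuous_id.div_const 2))).add
      (continuous_finset_sum _ fun i _ => continuous_const.mul
        (((continuous_const.add (continuous_const.mul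
          ((Real.continuous_sinh.comp (continuous_id.div_const 2)).pow 2))).sqrt).sub
          continuous_const))).add continuous_const
  have hmemS : Set.Ioo (0:ℝ) S ∈ 𝓝[>] (0:ℝ) := Ioo_mem_nhdsGT_of_mem ⟨le_refl 0, hS⟩
  -- Step 1: c₀ = 0
  have hc₀ : c₀ = 0 := by
    have h1 : Tendsto Φ (𝓝[>] (0:ℝ)) (𝓝 (Φ 0)) :=
      (hΦcont.tendsto 0).mono_left nhdsWithin_le_nhds
    have hΦ0 : Φ 0 = c₀ := by
      rw [hΦ_def]; simp
    rw [hΦ0] at h1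
    have h2 : Tendsto Φ (𝓝[>] (0:ℝ)) (𝓝 0) := by
      refine tendsto_const_nhds.congr' ?_
      filter_upwards [hmemS] with s hs using (hΦ s hs).symm
    exact (tendsto_nhds_unique h1 h2)
  -- Step 2: R = 0
  have hR : R = 0 := by
    set Ψ : ℝ → ℝ := fun s => ∑ i, d i *
        (t i * Real.sinh (s / 2) / (Real.sqrt (1 + t i * Real.sinh (s / 2) ^ 2) + 1)) with hΨ_def
    have hden : ∀ (i : Fin n) (s : ℝ), 0 < Real.sqrt (1 + t i * Real.sinh (s / 2) ^ 2) + 1 := by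
      intro i s
      have := Real.sqrt_nonneg (1 + t i * Real.sinh (s / 2) ^ 2)
      linarith
    have hΨcont : Continuous Ψ := by
      rw [hΨ_def]
      refine continuous_finset_sum _ fun i _ => continuous_const.mul ?_
      refine Continuous.div (continuous_const.mul
        (Real.continuous_sinh.comp (continuous_id.div_const 2)))
        (((continuous_const.add (continuous_const.mul
          ((Real.continuous_sinh.comp (continuous_id.div_const 2)).pow 2))).sqrt).add
          continuous_const) (fun s => (hden i s).ne')
    have h1 : Tendsto Ψ (𝓝[>] (0:ℝ)) (𝓝 (Ψ 0)) :=
      (hΨcont.tendsto 0).mono_left nhdsWithin_le_nhds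
    have hΨ0 : Ψ 0 = 0 := by rw [hΨ_def]; simp
    rw [hΨ0] at h1
    have h2 : Tendsto Ψ (𝓝[>] (0:ℝ)) (𝓝 (-R)) := by
      refine tendsto_const_nhds.congr' ?_
      filter_upwards [hmemS] with s hs
      have hx : 0 < Real.sinh (s / 2) := Real.sinh_pos_iff.2 (by linarith [hs.1])
      have hΦs := hΦ s hs
      simp only [hΦ_def, hc₀, add_zero] at hΦs
      have hkey : (∑ i, d i * (Real.sqrt (1 + t i * Real.sinh (s / 2) ^ 2) - 1))
          = Real.sinh (s / 2) * Ψ s := by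
        rw [hΨ_def, Finset.mul_sum]
        refine Finset.sum_congr rfl fun i _ => ?_
        have hpos : (0:ℝ) ≤ 1 + t i * Real.sinh (s / 2) ^ 2 := by positivity
        have hsq := Real.sq_sqrt hpos
        have hne := (hden i s).ne'
        field_simp
        linear_combination d i * hsq
      rw [hkey] at hΦs
      have : Real.sinh (s / 2) * (R + Ψ s) = 0 := by linarith [hΦs]
      have := (mul_eq_zero.1 this).resolve_left hx.ne'
      linarith
    have := tendsto_nhds_unique h1 h2
    linarith
  -- Step 3: the identity in u
  have hUpos : 0 < Real.sinh (S / 2) := Real.sinh_pos_iff.2 (by linarith)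
  set U : ℝ := Real.sinh (S / 2) ^ 2 with hU_def
  have hU : 0 < U := by positivity
  have hF : ∀ u ∈ Set.Ioo (0:ℝ) U, ∑ i, d i * ((1 + t i * u) ^ ((1:ℝ)/2) - 1) = 0 := by
    intro u hu
    set s : ℝ := 2 * Real.arsinh (Real.sqrt u) with hs_def
    have hs2 : s / 2 = Real.arsinh (Real.sqrt u) := by rw [hs_def]; ring
    have hx : Real.sinh (s / 2) = Real.sqrt u := by rw [hs2, Real.sinh_arsinh]
    have hx2 : Real.sinh (s / 2) ^ 2 = u := by rw [hx, Real.sq_sqrt hu.1.le]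
    have hs_mem : s ∈ Set.Ioo (0:ℝ) S := by
      constructor
      · have : 0 < Real.arsinh (Real.sqrt u) :=
          Real.arsinh_pos_iff.2 (Real.sqrt_pos.2 hu.1)
        rw [hs_def]; linarith
      · have h1 : Real.sqrt u < Real.sinh (S / 2) := by
          have := Real.sqrt_lt_sqrt hu.1.le hu.2
          rwa [hU_def, Real.sqrt_sq hUpos.le] at this
        have h2 : Real.arsinh (Real.sqrt u) < S / 2 := by
          rw [← Real.arsinh_sinh (S / 2)]
          exact Real.arsinh_lt_arsinh.2 h1
        rw [hs_def]; linarith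
    have := hΦ s hs_mem
    simp only [hΦ_def, hc₀, hR, add_zero, zero_mul, zero_add, hx2] at this
    rw [← this]
    refine Finset.sum_congr rfl fun i _ => ?_
    rw [Real.sqrt_eq_rpow]
  -- Step 4: moments at u₀ = U/2
  have hu₀ : (U / 2) ∈ Set.Ioo (0:ℝ) U := ⟨by linarith, by linarith⟩
  have hpos₀ : ∀ i, (0:ℝ) < 1 + t i * (U / 2) := fun i => by
    nlinarith [ht_pos i, hu₀.1]
  set ρ : Fin n → ℝ := fun i => t i / (1 + t i * (U / 2)) with hρ_def
  set e : Fin n → ℝ := fun i => d i * t i * (1 + t i * (U / 2)) ^ (-(1:ℝ)/2) with he_def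
  have hM : ∀ k : ℕ, ∑ j, e j * ρ j ^ k = 0 := by
    intro k
    have := aux_moments t d ht_pos hU hF k (U / 2) hu₀
    rw [← this]
    refine Finset.sum_congr rfl fun i _ => ?_
    have hp := hpos₀ i
    rw [he_def, hρ_def]
    have hsplit : (1 + t i * (U / 2)) ^ (-(1:ℝ)/2 - k)
        = (1 + t i * (U / 2)) ^ (-(1:ℝ)/2) * ((1 + t i * (U / 2)) ^ (k:ℕ))⁻¹ := by
      rw [show -(1:ℝ)/2 - k = -(1:ℝ)/2 + (-(k:ℝ)) by ring, Real.rpow_add hp,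
        Real.rpow_neg hp.le, Real.rpow_natCast]
    rw [hsplit, div_pow]
    field_simp
    ring
  -- Step 5: injectivity of ρ
  have ht_inj : Function.Injective t := by
    intro i j hij
    have h1 : Real.sin (θ i / 2) ^ 2 = Real.sin (θ j / 2) ^ 2 := by
      have := hij
      rw [ht_def] at this
      exact inv_injective this
    have h2 : Real.sin (θ i / 2) = Real.sin (θ j / 2) := by
      nlinarith [hsin_pos i, hsin_pos j]
    have h3 : θ i / 2 = θ j / 2 := by
      refine Real.injOn_sin ⟨by linarith [(hθ i).1], by linarith [(hθ i).2]⟩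
        ⟨by linarith [(hθ j).1], by linarith [(hθ j).2]⟩ h2
    exact hθ_inj (by linarith)
  have hρ_inj : Function.Injective ρ := by
    intro i j hij
    rw [hρ_def] at hij
    simp only at hij
    have hi := hpos₀ i
    have hj := hpos₀ j
    have : t i * (1 + t j * (U / 2)) = t j * (1 + t i * (U / 2)) := by
      rw [div_eq_div_iff hi.ne' hj.ne'] at hij
      linarith [hij]
    have : t i = t j := by nlinarith
    exact ht_inj this
  have he_zero : ∀ i, e i = 0 := aux_vandermonde ρ e hρ_inj hM
  -- conclude
  refine ⟨hR, hc₀, fun i => ?_⟩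
  have := he_zero i
  rw [he_def] at this
  have hrp : (0:ℝ) < (1 + t i * (U / 2)) ^ (-(1:ℝ)/2) :=
    Real.rpow_pos_of_pos (hpos₀ i) _
  have hd0 : d i = 0 := by
    rcases mul_eq_zero.1 this with h' | h'
    · rcases mul_eq_zero.1 h' with h'' | h''
      · exact h''
      · exact absurd h'' (ht_pos i).ne'
    · exact absurd h' hrp.ne'
  rw [hd_def] at hd0
  have : (2:ℝ) * π ≠ 0 := by positivity
  exact (mul_eq_zero.1 hd0).resolve_right this
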